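/- Let N be a positive natural number and V = Fin N → ℝ with weighted inner product ⟨f,g⟩ = w·Σ_i f i·g i (w > 0), pointwise product *, and constant-one function 𝟙. Let Δh : V →ₗ[ℝ] V be symmetric and G = Δh∘Δh + 2a·Δh + α·id for reals a, α. Let Δt, C₀, rⁿ, rⁿ⁺¹ ∈ ℝ and M̄, ḡ, φⁿ, φⁿ⁺¹ ∈ V with ⟨M̄,𝟙⟩ ≠ 0 satisfy: μ = G((φⁿ+φⁿ⁺¹)/2) + (rⁿ + rⁿ⁺¹)·ḡ, L = ⟨M̄,μ⟩/⟨M̄,𝟙⟩, φⁿ⁺¹ - φⁿ = -Δt·(M̄*(μ - L·𝟙)), and rⁿ⁺¹ - rⁿ = ⟨ḡ, φⁿ⁺¹ - φⁿ⟩. Then the discrete energy Fᵏ = (1/2)⟨φᵏ,Gφᵏ⟩ + (rᵏ)² - C₀ satisfies Fⁿ⁺¹ - Fⁿ = -Δt·⟨μ - L·𝟙, M̄*(μ - L·𝟙)⟩; in particular Fⁿ⁺¹ ≤ Fⁿ when Δt ≥ 0 and M̄ is pointwise nonnegative (energy dissipation law of the fully discrete SAV scheme for the Allen–Cahn model with a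 Lagrange multiplier, Scheme 4.8). -/

import Mathlib

/-- Energy dissipation law of the fully discrete SAV scheme for the Allen–Cahn
model with a Lagrange multiplier (Scheme 4.8). -/
theorem discrete_energy_dissipation_AC_Lagrange_SAV
    (N : ℕ) (hN : 0 < N) (w : ℝ) (hw : 0 < w)
    (ip : (Fin N → ℝ) → (Fin N → ℝ) → ℝ)
    (hip : ∀ f g, ip f g = w * ∑ i, f i * g i)
    (one : Fin N → ℝ) (hone : one = fun _ => 1)
    (Δh : (Fin N → ℝ) →ₗ[ℝ] (Fin N → ℝ))
    (hsym : ∀ f g, ip (Δh f) g = ip f (Δh g))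
    (a α : ℝ) (G : (Fin N → ℝ) → (Fin N → ℝ))
    (hG : ∀ f, G f = Δh (Δh f) + (2 * a) • Δh f + α • f)
    (Δt C₀ rn rn1 : ℝ) (Mbar gbar phin phin1 mu : Fin N → ℝ)
    (hM : ip Mbar one ≠ 0)
    (hmu : mu = G ((1 / 2 : ℝ) • (phin + phin1)) + (rn + rn1) • gbar)
    (L : ℝ) (hL : L = ip Mbar mu / ip Mbar one)
    (hphi : phin1 - phin = (-Δt) • (Mbar * (mu - L • one)))
    (hr : rn1 - rn = ip gbar (phin1 - phin))
    (Fn Fn1 : ℝ)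
    (hFn : Fn = (1 / 2) * ip phin (G phin) + rn ^ 2 - C₀)
    (hFn1 : Fn1 = (1 / 2) * ip phin1 (G phin1) + rn1 ^ 2 - C₀) :
    Fn1 - Fn = -Δt * ip (mu - L • one) (Mbar * (mu - L • one)) ∧
    (0 ≤ Δt → (∀ i, 0 ≤ Mbar i) → Fn1 ≤ Fn) := by
  -- bilinearity lemmas
  have hip_addl : ∀ f g h : Fin N → ℝ, ip (f + g) h = ip f h + ip g h := by
    intro f g h
    simp [hip, add_mul, Finset.sum_add_distrib, mul_add]
  have hip_addr : ∀ f g h : Fin N → ℝ, ip f (g + h) = ip f g + ip f h := by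
    intro f g h
    simp [hip, mul_add, Finset.sum_add_distrib]
  have hip_smull : ∀ (c : ℝ) (f g : Fin N → ℝ), ip (c • f) g = c * ip f g := by
    intro c f g
    have : ∑ i, (c * f i) * g i = c * ∑ i, f i * g i := by
      rw [Finset.mul_sum]; exact Finset.sum_congr rfl fun i _ => by ring
    simp only [hip, Pi.smul_apply, smul_eq_mul, this]; ring
  have hip_comm : ∀ f g : Fin N → ℝ, ip f g = ip g f := by
    intro f g
    simp only [hip]
    congr 1
    exact Finset.sum_congr rfl fun i _ => by ring
  have hip_smulr : ∀ (c : ℝ) (f g : Fin N → ℝ), ip f (c • g) = c * ip f g := by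
    intro c f g
    rw [hip_comm, hip_smull, hip_comm]
  have hip_subl : ∀ f g h : Fin N → ℝ, ip (f - g) h = ip f h - ip g h := by
    intro f g h
    have := hip_addl (f - g) g h
    rw [sub_add_cancel] at this
    linarith
  have hip_subr : ∀ f g h : Fin N → ℝ, ip f (g - h) = ip f g - ip f h := by
    intro f g h
    rw [hip_comm, hip_subl, hip_comm g f, hip_comm h f]
  -- G is linear
  have hGadd : ∀ f g, G (f + g) = G f + G g := by
    intro f g
    simp only [hG, map_add]
    module
  have hGsmul : ∀ (c : ℝ) f, G (c • f) = c • G f := by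
    intro c f
    simp only [hG, map_smul]
    module
  -- G is symmetric
  have hGsym : ∀ f g, ip (G f) g = ip f (G g) := by
    intro f g
    simp only [hG, hip_addl, hip_addr, hip_smull, hip_smulr]
    rw [hsym (Δh f) g, hsym f (Δh g), hsym f g]
  set ψ : Fin N → ℝ := mu - L • one with hψ
  set d : Fin N → ℝ := phin1 - phin with hd
  -- key: ⟨μ, d⟩ = Fn1 - Fn
  have hsum : phin + phin1 = phin1 - phin + (2 : ℝ) • phin := by module
  have hGs : ip mu d = (1/2) * (ip d (G phin1) + ip d (G phin)) + (rn + rn1) * (rn1 - rn) := by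
    rw [hmu, hip_addl, hGsmul, hip_smull, hip_smull, hip_comm, hr, hGadd, hip_addr]
    ring
  have hcross : ip phin (G phin1) = ip phin1 (G phin) := by
    rw [← hGsym, hip_comm]
  have henergy : ip mu d = Fn1 - Fn := by
    rw [hGs, hd, hip_subl, hip_subl, hcross, hFn, hFn1]
    have h1 : ip phin1 (G phin1) = ip phin1 (G phin1) := rfl
    ring
  -- orthogonality of L • one with Mbar * ψ
  have hone_ip : ∀ f : Fin N → ℝ, ip one (Mbar * f) = ip Mbar f := by
    intro f
    simp only [hip, hone]
    congr 1
    exact Finset.sum_congr rfl fun i _ => by simp [Pi.mul_apply]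
  have hMψ : ip Mbar ψ = 0 := by
    rw [hψ, hip_subr, hip_smulr, hL]
    field_simp
    ring
  have horth : ip mu (Mbar * ψ) = ip ψ (Mbar * ψ) := by
    have : ip ψ (Mbar * ψ) = ip mu (Mbar * ψ) - L * ip one (Mbar * ψ) := by
      rw [hψ, hip_subl, hip_smull]
    rw [this, hone_ip, hMψ]
    ring
  have hmain : Fn1 - Fn = -Δt * ip ψ (Mbar * ψ) := by
    rw [← henergy, hphi, hip_smulr, horth]
  refine ⟨hmain, fun hΔt hMnn => ?_⟩
  have hnonneg : 0 ≤ ip ψ (Mbar * ψ) := by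
    rw [hip]
    apply mul_nonneg hw.le
    apply Finset.sum_nonneg
    intro i _
    have : ψ i * (Mbar * ψ) i = Mbar i * ψ i ^ 2 := by
      simp [Pi.mul_apply]; ring
    rw [this]
    exact mul_nonneg (hMnn i) (sq_nonneg _)
  nlinarith [hmain]
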